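/- arXiv:1201.3714 — 5 statements merged into one kernel-verified Lean document; each statement's English description precedes it below -/
import Mathlib

section
/- Let g be a finite-dimensional real Lie algebra equipped with an ad-invariant inner product ⟨·,·⟩ (i.e. ⟨[Z,X],Y⟩ = −⟨X,[Z,Y]⟩ for all X,Y,Z ∈ g), and let X, V ∈ g. Then the Lie ideal of g generated by the set [g,X] = {[Y,X] : Y ∈ g} is orthogonal to the Lie ideal generated by V if and only if the Lie ideal of g generated by [g,V] = {[Y,V] : Y ∈ g} is orthogonal to the Lie ideal generated by X. -/
section Aux

variable {L : Type*} [LieRing L] [LieAlgebra ℝ L]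
variable (B : L →ₗ[ℝ] L →ₗ[ℝ] ℝ)

/-- Orthogonal complement of a Lie ideal w.r.t. an invariant form is a Lie ideal. -/
def perpIdeal (hinv : ∀ Z X Y : L, B ⁅Z, X⁆ Y = - B X ⁅Z, Y⁆)
    (J : LieIdeal ℝ L) : LieIdeal ℝ L where
  carrier := {a | ∀ b ∈ J, B a b = 0}
  add_mem' := by
    intro a a' ha ha' b hb
    simp [ha b hb, ha' b hb]
  zero_mem' := by intro b hb; simp
  smul_mem' := by
    intro c a ha b hb
    simp [ha b hb]
  lie_mem := by
    intro z a ha b hb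
    rw [hinv]
    have : ⁅z, b⁆ ∈ J := J.lie_mem hb
    simp [ha _ this]

@[simp] lemma mem_perpIdeal (hinv : ∀ Z X Y : L, B ⁅Z, X⁆ Y = - B X ⁅Z, Y⁆)
    (J : LieIdeal ℝ L) (a : L) :
    a ∈ perpIdeal B hinv J ↔ ∀ b ∈ J, B a b = 0 := Iff.rfl

/-- The set of `b` with `⁅z, b⁆ ∈ J'` for all `z`, when `J'` is a Lie ideal,
is a Lie ideal. -/
def stabIdeal (J' : LieIdeal ℝ L) : LieIdeal ℝ L where
  carrier := {b | ∀ z : L, ⁅z, b⁆ ∈ J'}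
  add_mem' := by
    intro b b' hb hb' z
    rw [lie_add]
    exact J'.add_mem (hb z) (hb' z)
  zero_mem' := by intro z; rw [lie_zero]; exact J'.zero_mem
  smul_mem' := by
    intro c b hb z
    rw [lie_smul]
    exact J'.smul_mem c (hb z)
  lie_mem := by
    intro w b hb z
    have h : ⁅z, ⁅w, b⁆⁆ = ⁅⁅z, w⁆, b⁆ + ⁅w, ⁅z, b⁆⁆ := leibniz_lie z w b
    rw [h]
    exact J'.add_mem (hb _) (J'.lie_mem (hb z))

/-- Key lemma: if the ideal generated by `[L,X]` is orthogonal to `V`, then the ideal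
generated by `[L,V]` is orthogonal to the ideal generated by `X`. -/
lemma key (hsymm : ∀ x y : L, B x y = B y x)
    (hinv : ∀ Z X Y : L, B ⁅Z, X⁆ Y = - B X ⁅Z, Y⁆) (X V : L)
    (P : ∀ a ∈ LieSubmodule.lieSpan ℝ L {w : L | ∃ Y : L, ⁅Y, X⁆ = w}, B a V = 0) :
    ∀ a ∈ LieSubmodule.lieSpan ℝ L {w : L | ∃ Y : L, ⁅Y, V⁆ = w},
      ∀ b ∈ LieSubmodule.lieSpan ℝ L ({X} : Set L), B a b = 0 := by
  set J' : LieIdeal ℝ L := LieSubmodule.lieSpan ℝ L {w : L | ∃ Y : L, ⁅Y, X⁆ = w} with hJ'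
  set J : LieIdeal ℝ L := LieSubmodule.lieSpan ℝ L ({X} : Set L) with hJ
  -- J ≤ stabIdeal J' : every bracket of an element of J lies in J'
  have hJstab : J ≤ stabIdeal J' := by
    rw [hJ, LieSubmodule.lieSpan_le]
    intro x hx
    rcases hx with rfl
    intro z
    exact LieSubmodule.subset_lieSpan ⟨z, rfl⟩
  -- the span of [L,V] lies in the perp of J
  have : LieSubmodule.lieSpan ℝ L {w : L | ∃ Y : L, ⁅Y, V⁆ = w} ≤ perpIdeal B hinv J := by
    rw [LieSubmodule.lieSpan_le]
    rintro w ⟨z, rfl⟩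
    intro b hb
    have h1 : B ⁅z, V⁆ b = - B V ⁅z, b⁆ := hinv z V b
    have h2 : ⁅z, b⁆ ∈ J' := hJstab hb z
    rw [h1, hsymm V ⁅z, b⁆, P _ h2, neg_zero]
  intro a ha b hb
  exact this ha b hb

end Aux

/-- For a finite-dimensional real Lie algebra `L` with an ad-invariant inner
product `B`, the Lie ideal generated by `[L, X]` is orthogonal to the Lie ideal generated by
`V` iff the Lie ideal generated by `[L, V]` is orthogonal to the Lie ideal generated by `X`. -/
theorem stmt_0 (L : Type*) [LieRing L] [LieAlgebra ℝ L] [FiniteDimensional ℝ L]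
    (B : L →ₗ[ℝ] L →ₗ[ℝ] ℝ)
    (hsymm : ∀ x y : L, B x y = B y x)
    (hpos : ∀ x : L, x ≠ 0 → 0 < B x x)
    (hinv : ∀ Z X Y : L, B ⁅Z, X⁆ Y = - B X ⁅Z, Y⁆)
    (X V : L) :
    ((∀ a ∈ LieSubmodule.lieSpan ℝ L {w : L | ∃ Y : L, ⁅Y, X⁆ = w},
        ∀ b ∈ LieSubmodule.lieSpan ℝ L ({V} : Set L), B a b = 0) ↔
      (∀ a ∈ LieSubmodule.lieSpan ℝ L {w : L | ∃ Y : L, ⁅Y, V⁆ = w},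
        ∀ b ∈ LieSubmodule.lieSpan ℝ L ({X} : Set L), B a b = 0)) := by
  have hVmem : V ∈ LieSubmodule.lieSpan ℝ L ({V} : Set L) :=
    LieSubmodule.subset_lieSpan rfl
  have hXmem : X ∈ LieSubmodule.lieSpan ℝ L ({X} : Set L) :=
    LieSubmodule.subset_lieSpan rfl
  constructor
  · intro h
    exact key B hsymm hinv X V (fun a ha => h a ha V hVmem)
  · intro h
    exact key B hsymm hinv V X (fun a ha => h a ha X hXmem)
end

section
/- Let g be a finite-dimensional real Lie algebra equipped with an ad-invariant inner product ⟨·,·⟩, and let X, V ∈ g. Suppose the Lie ideal of g generated by [g,X] = {[Y,X] : Y ∈ g} is orthogonal to the Lie ideal generated by V. Then for all finite sequences Y₁, …, Yₖ and Z₁, …, Zₗ of elements of g, ⟨exp(ad Y₁) ∘ ⋯ ∘ exp(ad Yₖ)(X), exp(ad Z₁) ∘ ⋯ ∘ exp(ad Zₗ)(V)⟩ = ⟨X, V⟩; that is, the inner product between any point of the orbit of X and any point of the orbit of V under the group generated by the operators exp(ad Y), Y ∈ g, is the constant ⟨X,V⟩. -/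
open Module

/-- The exponential of an endomorphism of a finite-dimensional real vector space,
computed via the matrix exponential in a (fixed) basis. -/
noncomputable def expEnd {L : Type*} [AddCommGroup L] [Module ℝ L] [FiniteDimensional ℝ L]
    (f : Module.End ℝ L) : Module.End ℝ L :=
  (LinearMap.toMatrix (Module.finBasis ℝ L) (Module.finBasis ℝ L)).symm
    (NormedSpace.exp (LinearMap.toMatrix (Module.finBasis ℝ L) (Module.finBasis ℝ L) f))

attribute [local instance] Matrix.linftyOpNormedAddCommGroup Matrix.linftyOpNormedRing
  Matrix.linftyOpNormedAlgebra

set_option maxHeartbeats 1000000 in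
lemma expEnd_sub_mem {L : Type*} [AddCommGroup L] [Module ℝ L] [FiniteDimensional ℝ L]
    (S : Submodule ℝ L) (f : Module.End ℝ L) (hS : ∀ s ∈ S, f s ∈ S) (x : L) (hx : f x ∈ S) :
    expEnd f x - x ∈ S := by
  classical
  set b := Module.finBasis ℝ L with hb
  set M := LinearMap.toMatrix b b f with hMdef
  set e : L ≃ₗ[ℝ] (Fin (finrank ℝ L) → ℝ) := b.equivFun with he
  have hfpow : ∀ n : ℕ, (f ^ (n + 1)) x ∈ S := by
    intro n
    induction n with
    | zero => simpa using hx
    | succ n ih => rw [pow_succ']; exact hS _ ih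
  let h : Matrix (Fin (finrank ℝ L)) (Fin (finrank ℝ L)) ℝ →ₗ[ℝ] (Fin (finrank ℝ L) → ℝ) :=
    e.toLinearMap ∘ₗ (LinearMap.applyₗ x) ∘ₗ (Matrix.toLin b b).toLinearMap
  have hcont : Continuous h := h.continuous_of_finiteDimensional
  have hpow : ∀ n : ℕ, (Matrix.toLin b b) (M ^ n) = f ^ n := by
    intro n
    induction n with
    | zero => rw [pow_zero, pow_zero, Matrix.toLin_one]; rfl
    | succ n ih =>
      rw [pow_succ, pow_succ, Matrix.toLin_mul b b b, ih]
      congr 1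
      rw [hMdef, ← LinearMap.toMatrix_symm]
      exact (LinearMap.toMatrix b b).symm_apply_apply f
  have hh : ∀ n : ℕ, h (M ^ n) = e ((f ^ n) x) := by
    intro n
    simp only [h, LinearMap.comp_apply, LinearEquiv.coe_coe, hpow]
    rfl
  have hsum : Summable fun n : ℕ => ((n.factorial : ℝ))⁻¹ • M ^ n :=
    NormedSpace.expSeries_summable' (𝕂 := ℝ) M
  let hc : Matrix (Fin (finrank ℝ L)) (Fin (finrank ℝ L)) ℝ →L[ℝ] (Fin (finrank ℝ L) → ℝ) :=
    ⟨h, hcont⟩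
  have hsum2 : Summable fun n : ℕ => ((n.factorial : ℝ))⁻¹ • e ((f ^ n) x) := by
    have hsm := (hsum.map hc.toLinearMap.toAddMonoidHom hc.continuous)
    exact hsm.congr fun n => by
      show hc (((n.factorial : ℝ))⁻¹ • M ^ n) = _
      rw [map_smul]; exact congrArg _ (hh n)
  have key : e (expEnd f x) = ∑' n : ℕ, ((n.factorial : ℝ))⁻¹ • e ((f ^ n) x) := by
    have h1 : e (expEnd f x) = h (NormedSpace.exp M) := by
      simp only [expEnd, LinearMap.toMatrix_symm, h, LinearMap.comp_apply,
        LinearEquiv.coe_coe]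
      rfl
    rw [h1, NormedSpace.exp_eq_tsum (𝕂 := ℝ)]
    rw [show h (∑' n : ℕ, ((n.factorial : ℝ))⁻¹ • M ^ n)
        = hc (∑' n : ℕ, ((n.factorial : ℝ))⁻¹ • M ^ n) from rfl, hc.map_tsum hsum]
    congr 1; funext n; rw [map_smul]; exact congrArg _ (hh n)
  -- split off n = 0
  have key2 : e (expEnd f x) - e x
      = ∑' n : ℕ, (((n+1).factorial : ℝ))⁻¹ • e ((f ^ (n+1)) x) := by
    rw [key, Summable.tsum_eq_zero_add hsum2]
    simp [Nat.factorial]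
  -- the image submodule is closed
  let S' : Submodule ℝ (Fin (finrank ℝ L) → ℝ) := S.map e.toLinearMap
  have hS'closed : IsClosed (S' : Set (Fin (finrank ℝ L) → ℝ)) :=
    S'.closed_of_finiteDimensional
  have hterm : ∀ n : ℕ, (((n+1).factorial : ℝ))⁻¹ • e ((f ^ (n+1)) x) ∈ S' := by
    intro n
    exact S'.smul_mem _ ⟨_, hfpow n, rfl⟩
  have hsum3 : Summable fun n : ℕ => (((n+1).factorial : ℝ))⁻¹ • e ((f ^ (n+1)) x) :=
    (summable_nat_add_iff 1).2 hsum2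
  have hmem : e (expEnd f x) - e x ∈ S' := by
    rw [key2]
    refine hS'closed.mem_of_tendsto hsum3.hasSum.tendsto_sum_nat
      (Filter.Eventually.of_forall fun k => ?_)
    exact Submodule.sum_mem _ fun i _ => hterm i
  rw [show e (expEnd f x) - e x = e (expEnd f x - x) from (map_sub e _ _).symm] at hmem
  obtain ⟨y, hy, hye⟩ := hmem
  rwa [← e.injective hye]

/-- `exp(ad Y₁) ∘ ⋯ ∘ exp(ad Yₖ)` applied to `X` (the case of the empty list being `X`). -/
noncomputable def applyExpAds {L : Type*} [LieRing L] [LieAlgebra ℝ L]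
    [FiniteDimensional ℝ L] (Ys : List L) (X : L) : L :=
  ((Ys.map fun Y => expEnd ((LieAlgebra.ad ℝ L Y : Module.End ℝ L))).foldr (· * ·) (1 : Module.End ℝ L)) X

lemma applyExpAds_nil {L : Type*} [LieRing L] [LieAlgebra ℝ L] [FiniteDimensional ℝ L]
    (X : L) : applyExpAds [] X = X := rfl

lemma applyExpAds_cons {L : Type*} [LieRing L] [LieAlgebra ℝ L] [FiniteDimensional ℝ L]
    (Y : L) (Ys : List L) (X : L) :
    applyExpAds (Y :: Ys) X = expEnd (LieAlgebra.ad ℝ L Y) (applyExpAds Ys X) := rfl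


/-- if the Lie ideal generated by `[L, X]` is orthogonal to the Lie ideal
generated by `V` (w.r.t. an ad-invariant inner product `B`), then
`B (exp(ad Y₁) ∘ ⋯ ∘ exp(ad Yₖ) X) (exp(ad Z₁) ∘ ⋯ ∘ exp(ad Zₗ) V) = B X V` for all
finite sequences `Y₁, …, Yₖ` and `Z₁, …, Zₗ` in `L`. -/
theorem stmt_1 (L : Type*) [LieRing L] [LieAlgebra ℝ L] [FiniteDimensional ℝ L]
    (B : L →ₗ[ℝ] L →ₗ[ℝ] ℝ)
    (hsymm : ∀ x y : L, B x y = B y x)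
    (hpos : ∀ x : L, x ≠ 0 → 0 < B x x)
    (hinv : ∀ Z X Y : L, B ⁅Z, X⁆ Y = - B X ⁅Z, Y⁆)
    (X V : L)
    (horth : ∀ a ∈ LieSubmodule.lieSpan ℝ L {w : L | ∃ Y : L, ⁅Y, X⁆ = w},
        ∀ b ∈ LieSubmodule.lieSpan ℝ L ({V} : Set L), B a b = 0) :
    ∀ Ys Zs : List L, B (applyExpAds Ys X) (applyExpAds Zs V) = B X V := by
  intro Ys Zs
  set I := LieSubmodule.lieSpan ℝ L {w : L | ∃ Y : L, ⁅Y, X⁆ = w} with hI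
  set J := LieSubmodule.lieSpan ℝ L ({V} : Set L) with hJ
  have hVJ : V ∈ J := LieSubmodule.subset_lieSpan rfl
  have hbrXI : ∀ Y : L, ⁅Y, X⁆ ∈ I := fun Y => LieSubmodule.subset_lieSpan ⟨Y, rfl⟩
  -- K = elements of J orthogonal to X
  set K : Submodule ℝ L := (J : Submodule ℝ L) ⊓ LinearMap.ker (B X) with hK
  have hKJ : ∀ c ∈ K, c ∈ J := fun c hc => hc.1
  have hBXK : ∀ c ∈ K, B X c = 0 := fun c hc => hc.2
  have hadK : ∀ Z : L, ∀ c ∈ K, ⁅Z, c⁆ ∈ K := by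
    intro Z c hc
    refine ⟨J.lie_mem hc.1, ?_⟩
    show B X ⁅Z, c⁆ = 0
    have h := hinv Z X c
    rw [horth _ (hbrXI Z) c hc.1] at h
    linarith
  have hZVK : ∀ Z : L, ⁅Z, V⁆ ∈ K := by
    intro Z
    refine ⟨J.lie_mem hVJ, ?_⟩
    show B X ⁅Z, V⁆ = 0
    have := hinv Z X V
    rw [horth _ (hbrXI Z) V hVJ] at this
    linarith [this]
  -- part 1: applyExpAds Ys X - X ∈ I
  have keyY : ∀ Ys : List L, applyExpAds Ys X - X ∈ (I : Submodule ℝ L) := by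
    intro Ys
    induction Ys with
    | nil => rw [applyExpAds_nil, sub_self]; exact zero_mem _
    | cons Y Ys ih =>
      rw [applyExpAds_cons]
      set w := applyExpAds Ys X with hw
      have h1 : expEnd (LieAlgebra.ad ℝ L Y) w - w ∈ (I : Submodule ℝ L) := by
        refine expEnd_sub_mem _ _ (fun s hs => I.lie_mem hs) w ?_
        show ⁅Y, w⁆ ∈ I
        have hXw : X + (w - X) = w := by abel
        have : ⁅Y, w⁆ = ⁅Y, X⁆ + ⁅Y, w - X⁆ := by rw [← lie_add, hXw]
        rw [this]
        exact I.add_mem' (hbrXI Y) (I.lie_mem ih)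
      have := Submodule.add_mem _ h1 ih
      simpa [sub_add_sub_cancel] using this
  -- part 2: applyExpAds Zs V - V ∈ K
  have keyZ : ∀ Zs : List L, applyExpAds Zs V - V ∈ K := by
    intro Zs
    induction Zs with
    | nil => rw [applyExpAds_nil, sub_self]; exact zero_mem _
    | cons Z Zs ih =>
      rw [applyExpAds_cons]
      set w := applyExpAds Zs V with hw
      have h1 : expEnd (LieAlgebra.ad ℝ L Z) w - w ∈ K := by
        refine expEnd_sub_mem _ _ (fun s hs => hadK Z s hs) w ?_
        show ⁅Z, w⁆ ∈ K
        have hVw : V + (w - V) = w := by abel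
        have : ⁅Z, w⁆ = ⁅Z, V⁆ + ⁅Z, w - V⁆ := by rw [← lie_add, hVw]
        rw [this]
        exact K.add_mem (hZVK Z) (hadK Z _ ih)
      have := K.add_mem h1 ih
      simpa [sub_add_sub_cancel] using this
  -- conclude
  set a := applyExpAds Ys X - X with ha
  set c := applyExpAds Zs V - V with hc
  have h1 : applyExpAds Ys X = X + a := by rw [ha]; abel
  have h2 : applyExpAds Zs V = V + c := by rw [hc]; abel
  rw [h1, h2]
  have haI : a ∈ I := keyY Ys
  have hcK : c ∈ K := keyZ Zs
  have hVc : V + c ∈ J := J.add_mem' hVJ (hKJ c hcK)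
  have e1 : B a (V + c) = 0 := horth a haI _ hVc
  have e2 : B X c = 0 := hBXK c hcK
  simp only [map_add, LinearMap.add_apply] at e1 ⊢
  rw [e2]
  linarith
end

section
/- Let α be an inner product on the real Lie algebra su(2) of traceless skew-Hermitian 2×2 complex matrices, let β : su(2) → ℝ be a linear functional, and let X ∈ su(2) with X ≠ 0. If the function Y ↦ √(α(Y,Y)) + β(Y) is constant on the adjoint orbit {uXu⁻¹ : u ∈ SU(2)}, then β = 0 and there exists c > 0 such that α(Y,Z) = c · ⟨Y,Z⟩_bi for all Y, Z ∈ su(2), where ⟨A,B⟩_bi = Re tr(Aᴴ B). In particular, any left-invariant Randers metric on SU(2) which has a nonzero Killing vector field of constant length in su(2) is Riemannian and bi-invariant. -/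
open Matrix

attribute [local instance 100] LieRing.ofAssociativeRing

/-- The real Lie algebra `su(n)` of traceless skew-Hermitian `n × n` complex matrices,
as a Lie subalgebra of the Lie algebra of all `n × n` complex matrices (with commutator
bracket). -/
def su (n : ℕ) : LieSubalgebra ℝ (Matrix (Fin n) (Fin n) ℂ) where
  carrier := {A | Aᴴ = -A ∧ A.trace = 0}
  add_mem' := by
    rintro A B ⟨hA1, hA2⟩ ⟨hB1, hB2⟩
    constructor
    · simp [conjTranspose_add, hA1, hB1]; abel
    · simp [trace_add, hA2, hB2]
  zero_mem' := by simp
  smul_mem' := by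
    rintro c A ⟨hA1, hA2⟩
    constructor
    · simp [conjTranspose_smul, hA1]
    · simp [trace_smul, hA2]
  lie_mem' := by
    rintro A B ⟨hA1, hA2⟩ ⟨hB1, hB2⟩
    constructor
    · simp only [Ring.lie_def, conjTranspose_sub, conjTranspose_mul, hA1, hB1]
      simp only [mul_neg, neg_mul, neg_sub, neg_neg]
    · simp [Ring.lie_def, trace_sub, trace_mul_comm A B]

/-- The bi-invariant inner product `⟨A, B⟩_bi = Re tr(Aᴴ B)`. -/
noncomputable def binner {n : ℕ} (A B : Matrix (Fin n) (Fin n) ℂ) : ℝ :=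
  ((Aᴴ * B).trace).re

theorem conj_mem_su {n : ℕ} (u : specialUnitaryGroup (Fin n) ℂ) {A : Matrix (Fin n) (Fin n) ℂ}
    (hA : A ∈ su n) : (u : Matrix (Fin n) (Fin n) ℂ) * A * (u : Matrix (Fin n) (Fin n) ℂ)ᴴ ∈ su n := by
  obtain ⟨hA1, hA2⟩ := hA
  have hu : (u : Matrix (Fin n) (Fin n) ℂ)ᴴ * (u : Matrix (Fin n) (Fin n) ℂ) = 1 := by
    have hmem : (u : Matrix (Fin n) (Fin n) ℂ) ∈ unitaryGroup (Fin n) ℂ :=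
      (Submonoid.mem_inf.mp u.2).1
    rw [Matrix.mem_unitaryGroup_iff'] at hmem
    simpa [Matrix.star_eq_conjTranspose] using hmem
  constructor
  · simp only [conjTranspose_mul, conjTranspose_conjTranspose, hA1]
    simp [Matrix.mul_assoc]
  · calc ((u : Matrix (Fin n) (Fin n) ℂ) * A * (u : Matrix (Fin n) (Fin n) ℂ)ᴴ).trace
        = ((u : Matrix (Fin n) (Fin n) ℂ)ᴴ * ((u : Matrix (Fin n) (Fin n) ℂ) * A)).trace := by
          rw [trace_mul_comm]
      _ = A.trace := by rw [← Matrix.mul_assoc, hu, Matrix.one_mul]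
      _ = 0 := hA2

/-- The adjoint action of `SU(n)` on `su(n)`: `Ad u X = u X u⁻¹ = u X uᴴ`. -/
noncomputable def Ad {n : ℕ} (u : specialUnitaryGroup (Fin n) ℂ) (X : su n) : su n :=
  ⟨(u : Matrix (Fin n) (Fin n) ℂ) * (X : Matrix (Fin n) (Fin n) ℂ) *
    (u : Matrix (Fin n) (Fin n) ℂ)ᴴ, conj_mem_su u X.2⟩

section Su2Aux

open Complex

/-- Entry structure of an element of `su 2`. -/
lemma su2_entries {X : Matrix (Fin 2) (Fin 2) ℂ} (hX : X ∈ su 2) :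
    X 0 0 = ((X 0 0).im : ℂ) * Complex.I ∧ X 1 1 = -(((X 0 0).im : ℂ) * Complex.I) ∧
      X 1 0 = -(starRingEnd ℂ) (X 0 1) := by
  obtain ⟨h1, h2⟩ := hX
  have e00 : (starRingEnd ℂ) (X 0 0) = -X 0 0 := by
    have := congrFun (congrFun h1 0) 0
    simpa [Matrix.conjTranspose_apply] using this
  have hre : (X 0 0).re = 0 := by
    have := congrArg Complex.re e00
    simp at this; linarith
  have h00 : X 0 0 = ((X 0 0).im : ℂ) * Complex.I := by
    apply Complex.ext <;> simp [hre]
  refine ⟨h00, ?_, ?_⟩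
  · have := h2
    rw [Matrix.trace_fin_two] at this
    rw [← h00]; linear_combination this
  · have := congrFun (congrFun h1 0) 1
    simp [Matrix.conjTranspose_apply] at this
    have := congrArg (starRingEnd ℂ) this; simpa using this

/-- Every element of `su 2` has the canonical form. -/
lemma su2_repr {X : Matrix (Fin 2) (Fin 2) ℂ} (hX : X ∈ su 2) :
    X = !![((X 0 0).im : ℂ) * Complex.I, X 0 1;
           -(starRingEnd ℂ) (X 0 1), -(((X 0 0).im : ℂ) * Complex.I)] := by
  obtain ⟨h00, h11, h10⟩ := su2_entries hX
  set a := (X 0 0).im with ha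
  set b := X 0 1 with hb
  ext i j
  fin_cases i <;> fin_cases j <;> simp [h00, h11, h10] <;> rfl

lemma binner_su2 {X : Matrix (Fin 2) (Fin 2) ℂ} (hX : X ∈ su 2) :
    binner X X = 2 * ((X 0 0).im ^ 2 + Complex.normSq (X 0 1)) := by
  obtain ⟨h00, h11, h10⟩ := su2_entries hX
  set a := (X 0 0).im with ha
  set b := X 0 1 with hb
  simp only [binner, Matrix.trace_fin_two, Matrix.mul_apply, Fin.sum_univ_two,
    Matrix.conjTranspose_apply, h00, h11, h10]
  simp [Complex.normSq_apply, Complex.mul_re, Complex.mul_im]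
  ring

lemma binner_su2_pos {X : Matrix (Fin 2) (Fin 2) ℂ} (hX : X ∈ su 2) (hne : X ≠ 0) :
    0 < binner X X := by
  rw [binner_su2 hX]
  rcases eq_or_ne (X 0 1) 0 with hb | hb
  · rcases eq_or_ne ((X 0 0).im) 0 with ha | ha
    · exfalso
      apply hne
      rw [su2_repr hX, ha, hb]
      ext i j; fin_cases i <;> fin_cases j <;> simp
    · have : 0 < (X 0 0).im ^ 2 := by positivity
      have := Complex.normSq_nonneg (X 0 1)
      nlinarith
  · have : 0 < Complex.normSq (X 0 1) := by
      simpa [Complex.normSq_pos] using hb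
    nlinarith [sq_nonneg ((X 0 0).im)]

lemma binner_symm (A B : Matrix (Fin 2) (Fin 2) ℂ) : binner A B = binner B A := by
  unfold binner
  have : (Bᴴ * A) = (Aᴴ * B)ᴴ := by
    rw [Matrix.conjTranspose_mul, Matrix.conjTranspose_conjTranspose]
  rw [this, Matrix.trace_conjTranspose]
  simp [Matrix.star_eq_conjTranspose]

lemma binner_add_left (A B C : Matrix (Fin 2) (Fin 2) ℂ) :
    binner (A + B) C = binner A C + binner B C := by
  simp [binner, Matrix.conjTranspose_add, Matrix.add_mul, Matrix.trace_add]

lemma binner_add_right (A B C : Matrix (Fin 2) (Fin 2) ℂ) :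
    binner A (B + C) = binner A B + binner A C := by
  simp [binner, Matrix.mul_add, Matrix.trace_add]

lemma binner_neg_neg (A B : Matrix (Fin 2) (Fin 2) ℂ) : binner (-A) (-B) = binner A B := by
  simp [binner, Matrix.conjTranspose_neg, Matrix.neg_mul, Matrix.mul_neg]

lemma binner_smul_smul (s : ℝ) (A B : Matrix (Fin 2) (Fin 2) ℂ) :
    binner (s • A) (s • B) = s ^ 2 * binner A B := by
  have hs : ∀ C : Matrix (Fin 2) (Fin 2) ℂ, s • C = ((s : ℂ) • C) := fun _ => rfl
  rw [hs A, hs B]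
  simp only [binner, Matrix.conjTranspose_smul, Matrix.smul_mul, Matrix.mul_smul,
    Matrix.trace_smul, smul_smul, smul_eq_mul]
  rw [Complex.star_def, Complex.conj_ofReal]
  rw [show ((s : ℂ) * (s : ℂ)) = ((s ^ 2 : ℝ) : ℂ) by push_cast; ring]
  simp [← Complex.ofReal_pow]

lemma conj_cancel {u A : Matrix (Fin 2) (Fin 2) ℂ} (hu : uᴴ * u = 1) :
    uᴴ * (u * A * uᴴ) * u = A := by
  calc uᴴ * (u * A * uᴴ) * u = (uᴴ * u) * A * (uᴴ * u) := by
        simp only [Matrix.mul_assoc]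
    _ = A := by rw [hu, Matrix.one_mul, Matrix.mul_one]

lemma su2_diag {X : Matrix (Fin 2) (Fin 2) ℂ} (hX : X ∈ su 2) {t : ℝ} (ht0 : 0 ≤ t)
    (ht2 : t ^ 2 = (X 0 0).im ^ 2 + Complex.normSq (X 0 1)) :
    ∃ u : specialUnitaryGroup (Fin 2) ℂ,
      (u : Matrix (Fin 2) (Fin 2) ℂ) * X * (u : Matrix (Fin 2) (Fin 2) ℂ)ᴴ =
        !![(t : ℂ) * Complex.I, 0; 0, -((t : ℂ) * Complex.I)] := by
  have hrepr := su2_repr hX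
  set a := (X 0 0).im with ha
  set b := X 0 1 with hbdef
  by_cases hc : t = a
  · have hb0 : b = 0 := by
      have h1 : Complex.normSq b = 0 := by nlinarith [Complex.normSq_nonneg b]
      simpa [Complex.normSq_eq_zero] using h1
    refine ⟨⟨1, one_mem _⟩, ?_⟩
    show (1 : Matrix (Fin 2) (Fin 2) ℂ) * X * (1 : Matrix (Fin 2) (Fin 2) ℂ)ᴴ = _
    rw [Matrix.conjTranspose_one, Matrix.one_mul, Matrix.mul_one, hrepr, hb0, ← hc]
    ext i j
    fin_cases i <;> fin_cases j <;> simp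
  · have hat : a ≤ t := by nlinarith [Complex.normSq_nonneg b, sq_nonneg (a - t), sq_nonneg (a + t)]
    have hat' : a < t := lt_of_le_of_ne hat (Ne.symm hc)
    have htpos : 0 < t := by
      rcases ht0.lt_or_eq with h | h
      · exact h
      · exfalso; nlinarith [Complex.normSq_nonneg b]
    set N := Real.sqrt (2 * t * (t - a)) with hNdef
    have hN2R : N ^ 2 = 2 * t * (t - a) := Real.sq_sqrt (by nlinarith)
    have hNpos : 0 < N := Real.sqrt_pos.mpr (by nlinarith)
    have hNC : (N : ℂ) ≠ 0 := by exact_mod_cast hNpos.ne'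
    have hb : (starRingEnd ℂ) b * b = (t : ℂ) ^ 2 - (a : ℂ) ^ 2 := by
      have h1 : Complex.normSq b = t ^ 2 - a ^ 2 := by nlinarith
      calc (starRingEnd ℂ) b * b = (Complex.normSq b : ℂ) :=
            (Complex.normSq_eq_conj_mul_self).symm
        _ = (t : ℂ) ^ 2 - (a : ℂ) ^ 2 := by rw [h1]; push_cast; ring
    have hN2 : (N : ℂ) ^ 2 = 2 * (t : ℂ) * ((t : ℂ) - (a : ℂ)) := by
      exact_mod_cast congrArg (fun x : ℝ => (x : ℂ)) hN2R
    set M := !![(starRingEnd ℂ) b, -Complex.I * ((t : ℂ) - (a : ℂ));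
                -Complex.I * ((t : ℂ) - (a : ℂ)), b] with hM
    have key1 : M * X * Mᴴ =
        ((N : ℂ) ^ 2) • !![(t : ℂ) * Complex.I, 0; 0, -((t : ℂ) * Complex.I)] := by
      rw [hrepr, hM]
      ext i j
      fin_cases i <;> fin_cases j <;>
        simp [Matrix.mul_apply, Fin.sum_univ_two, Matrix.conjTranspose_apply, _root_.map_mul]
      · linear_combination (Complex.I * (2 * (t : ℂ) - (a : ℂ))) * hb -
          (Complex.I * (t : ℂ)) * hN2 +
          (Complex.I * (a : ℂ) * ((t : ℂ) - (a : ℂ)) ^ 2) * Complex.I_sq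
      · linear_combination ((starRingEnd ℂ) b) * hb +
          ((starRingEnd ℂ) b * ((t : ℂ) ^ 2 - (a : ℂ) ^ 2)) * Complex.I_sq
      · linear_combination (-b) * hb - (b * ((t : ℂ) ^ 2 - (a : ℂ) ^ 2)) * Complex.I_sq
      · linear_combination (-(Complex.I * (2 * (t : ℂ) - (a : ℂ)))) * hb +
          (Complex.I * (t : ℂ)) * hN2 -
          (Complex.I * (a : ℂ) * ((t : ℂ) - (a : ℂ)) ^ 2) * Complex.I_sq
    have key2 : M * Mᴴ = ((N : ℂ) ^ 2) • 1 := by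
      rw [hM]
      ext i j
      fin_cases i <;> fin_cases j <;>
        simp [Matrix.mul_apply, Fin.sum_univ_two, Matrix.conjTranspose_apply, _root_.map_mul,
          Matrix.one_apply] <;>
        first
        | linear_combination hb - hN2 - (((t : ℂ) - (a : ℂ)) ^ 2) * Complex.I_sq
        | ring
    have key3 : M.det = (N : ℂ) ^ 2 := by
      rw [hM]
      simp [Matrix.det_fin_two]
      linear_combination hb - hN2 - (((t : ℂ) - (a : ℂ)) ^ 2) * Complex.I_sq
    set U := ((N : ℂ)⁻¹) • M with hU
    have hUH : Uᴴ = ((N : ℂ)⁻¹) • Mᴴ := by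
      rw [hU, Matrix.conjTranspose_smul]
      congr 1
      simp [Complex.star_def, map_inv₀, Complex.conj_ofReal]
    have hscal : (N : ℂ)⁻¹ * (N : ℂ)⁻¹ * (N : ℂ) ^ 2 = 1 := by field_simp
    have hmem : U ∈ Matrix.specialUnitaryGroup (Fin 2) ℂ := by
      rw [Matrix.mem_specialUnitaryGroup_iff]
      constructor
      · rw [Matrix.mem_unitaryGroup_iff, Matrix.star_eq_conjTranspose, hUH, hU,
          Matrix.smul_mul, Matrix.mul_smul, key2, smul_smul, smul_smul, hscal, one_smul]
      · rw [hU, Matrix.det_smul, key3]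
        simp [Fintype.card_fin]
        field_simp
    refine ⟨⟨U, hmem⟩, ?_⟩
    show U * X * Uᴴ = _
    rw [hUH, hU, Matrix.smul_mul, Matrix.smul_mul, Matrix.mul_smul, key1, smul_smul, smul_smul,
      hscal, one_smul]

lemma su2_conj_of_binner_eq (X Y : su 2)
    (h : binner (Y : Matrix (Fin 2) (Fin 2) ℂ) (Y : Matrix (Fin 2) (Fin 2) ℂ) =
         binner (X : Matrix (Fin 2) (Fin 2) ℂ) (X : Matrix (Fin 2) (Fin 2) ℂ)) :
    ∃ u : specialUnitaryGroup (Fin 2) ℂ, Y = Ad u X := by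
  set XM := (X : Matrix (Fin 2) (Fin 2) ℂ) with hXM
  set YM := (Y : Matrix (Fin 2) (Fin 2) ℂ) with hYM
  set t := Real.sqrt ((XM 0 0).im ^ 2 + Complex.normSq (XM 0 1)) with ht
  have ht0 : 0 ≤ t := Real.sqrt_nonneg _
  have ht2X : t ^ 2 = (XM 0 0).im ^ 2 + Complex.normSq (XM 0 1) :=
    Real.sq_sqrt (add_nonneg (sq_nonneg _) (Complex.normSq_nonneg _))
  have ht2Y : t ^ 2 = (YM 0 0).im ^ 2 + Complex.normSq (YM 0 1) := by
    have hx := binner_su2 X.2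
    have hy := binner_su2 Y.2
    rw [← hXM] at hx
    rw [← hYM] at hy
    rw [hx, hy] at h
    rw [ht2X]; linarith
  obtain ⟨u1, hu1⟩ := su2_diag X.2 ht0 ht2X
  obtain ⟨u2, hu2⟩ := su2_diag Y.2 ht0 ht2Y
  rw [← hXM] at hu1
  rw [← hYM] at hu2
  have m1 : (u1 : Matrix (Fin 2) (Fin 2) ℂ) ∈ Matrix.unitaryGroup (Fin 2) ℂ :=
    (Submonoid.mem_inf.mp u1.2).1
  have m2 : (u2 : Matrix (Fin 2) (Fin 2) ℂ) ∈ Matrix.unitaryGroup (Fin 2) ℂ :=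
    (Submonoid.mem_inf.mp u2.2).1
  have d1 : (u1 : Matrix (Fin 2) (Fin 2) ℂ).det = 1 := by
    have := (Submonoid.mem_inf.mp u1.2).2
    simpa [MonoidHom.mem_mker] using this
  have d2 : (u2 : Matrix (Fin 2) (Fin 2) ℂ).det = 1 := by
    have := (Submonoid.mem_inf.mp u2.2).2
    simpa [MonoidHom.mem_mker] using this
  set w := (u2 : Matrix (Fin 2) (Fin 2) ℂ)ᴴ * (u1 : Matrix (Fin 2) (Fin 2) ℂ) with hw
  have hwmem : w ∈ Matrix.specialUnitaryGroup (Fin 2) ℂ := by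
    rw [Matrix.mem_specialUnitaryGroup_iff]
    constructor
    · refine mul_mem ?_ m1
      rw [← Matrix.star_eq_conjTranspose]
      exact Unitary.star_mem m2
    · rw [Matrix.det_mul, Matrix.det_conjTranspose, d1, d2]
      simp
  refine ⟨⟨w, hwmem⟩, ?_⟩
  apply Subtype.ext
  show YM = w * XM * wᴴ
  have hu2' : (u2 : Matrix (Fin 2) (Fin 2) ℂ)ᴴ * (u2 : Matrix (Fin 2) (Fin 2) ℂ) = 1 := by
    rw [← Matrix.star_eq_conjTranspose]
    exact m2.1
  have e1 : (u2 : Matrix (Fin 2) (Fin 2) ℂ)ᴴ *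
      ((u2 : Matrix (Fin 2) (Fin 2) ℂ) * YM * (u2 : Matrix (Fin 2) (Fin 2) ℂ)ᴴ) *
      (u2 : Matrix (Fin 2) (Fin 2) ℂ) = YM := conj_cancel hu2'
  rw [hu2, ← hu1] at e1
  rw [hw, ← e1]
  rw [Matrix.conjTranspose_mul, Matrix.conjTranspose_conjTranspose]
  simp only [Matrix.mul_assoc]

end Su2Aux

/-- if `α` is an inner product on `su(2)`, `β` a linear functional, `X ≠ 0`,
and `Y ↦ √(α(Y,Y)) + β(Y)` is constant on the adjoint orbit of `X`, then `β = 0` and `α`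
is a positive multiple of the bi-invariant inner product. -/
theorem stmt_6
    (α : (su 2) →ₗ[ℝ] (su 2) →ₗ[ℝ] ℝ)
    (hsymm : ∀ x y : su 2, α x y = α y x)
    (hpos : ∀ x : su 2, x ≠ 0 → 0 < α x x)
    (β : (su 2) →ₗ[ℝ] ℝ)
    (X : su 2) (hX : X ≠ 0)
    (hconst : ∃ l : ℝ, ∀ Y : su 2,
      (∃ u : specialUnitaryGroup (Fin 2) ℂ, Y = Ad u X) →
        Real.sqrt (α Y Y) + β Y = l) :
    β = 0 ∧ ∃ c : ℝ, 0 < c ∧ ∀ Y Z : su 2,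
      α Y Z = c * binner (Y : Matrix (Fin 2) (Fin 2) ℂ) (Z : Matrix (Fin 2) (Fin 2) ℂ) := by
  classical
  obtain ⟨l, hl⟩ := hconst
  have hXM : (X : Matrix (Fin 2) (Fin 2) ℂ) ≠ 0 := by simpa using hX
  set r := binner (X : Matrix (Fin 2) (Fin 2) ℂ) (X : Matrix (Fin 2) (Fin 2) ℂ) with hr
  have hrpos : 0 < r := binner_su2_pos X.2 hXM
  have key : ∀ Y : su 2, binner (Y : Matrix (Fin 2) (Fin 2) ℂ) (Y : Matrix (Fin 2) (Fin 2) ℂ) = r →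
      β Y = 0 ∧ Real.sqrt (α Y Y) = l := by
    intro Y hY
    obtain ⟨u, hu⟩ := su2_conj_of_binner_eq X Y hY
    have h1 := hl Y ⟨u, hu⟩
    have hnegY : binner ((-Y : su 2) : Matrix (Fin 2) (Fin 2) ℂ)
        ((-Y : su 2) : Matrix (Fin 2) (Fin 2) ℂ) = r := by
      show binner (-(Y : Matrix (Fin 2) (Fin 2) ℂ)) (-(Y : Matrix (Fin 2) (Fin 2) ℂ)) = r
      rw [binner_neg_neg]; exact hY
    obtain ⟨u', hu'⟩ := su2_conj_of_binner_eq X (-Y) hnegY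
    have h2 := hl (-Y) ⟨u', hu'⟩
    have hαneg : α (-Y) (-Y) = α Y Y := by simp
    have hβneg : β (-Y) = -β Y := by simp
    rw [hαneg, hβneg] at h2
    exact ⟨by linarith, by linarith⟩
  -- scaling to the sphere
  have sphere : ∀ Y : su 2, Y ≠ 0 → ∃ s : ℝ, 0 < s ∧
      binner ((s • Y : su 2) : Matrix (Fin 2) (Fin 2) ℂ)
        ((s • Y : su 2) : Matrix (Fin 2) (Fin 2) ℂ) = r ∧
      s ^ 2 * binner (Y : Matrix (Fin 2) (Fin 2) ℂ) (Y : Matrix (Fin 2) (Fin 2) ℂ) = r := by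
    intro Y hY0
    have hYM : (Y : Matrix (Fin 2) (Fin 2) ℂ) ≠ 0 := by simpa using hY0
    have hbY : 0 < binner (Y : Matrix (Fin 2) (Fin 2) ℂ) (Y : Matrix (Fin 2) (Fin 2) ℂ) :=
      binner_su2_pos Y.2 hYM
    set q := binner (Y : Matrix (Fin 2) (Fin 2) ℂ) (Y : Matrix (Fin 2) (Fin 2) ℂ) with hq
    set s := Real.sqrt (r / q) with hs
    have hs2 : s ^ 2 = r / q := Real.sq_sqrt (by positivity)
    have hcoe : ((s • Y : su 2) : Matrix (Fin 2) (Fin 2) ℂ) = s • (Y : Matrix (Fin 2) (Fin 2) ℂ) := rfl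
    refine ⟨s, Real.sqrt_pos.mpr (by positivity), ?_, ?_⟩
    · rw [hcoe, binner_smul_smul, hs2]
      field_simp
      rfl
    · rw [hs2]
      field_simp
  have hβ : β = 0 := by
    ext Y
    rcases eq_or_ne Y 0 with rfl | hY0
    · simp
    · obtain ⟨s, hspos, hsph, _⟩ := sphere Y hY0
      have h1 := (key (s • Y) hsph).1
      rw [_root_.map_smul, smul_eq_mul] at h1
      have : β Y = 0 := by
        rcases mul_eq_zero.mp h1 with h | h
        · exact absurd h hspos.ne'
        · exact h
      simpa using this
  refine ⟨hβ, ?_⟩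
  have hXsph : Real.sqrt (α X X) = l := (key X hr.symm).2
  have hαX : 0 < α X X := hpos X hX
  have hlpos : 0 < l := by rw [← hXsph]; exact Real.sqrt_pos.mpr hαX
  refine ⟨l ^ 2 / r, by positivity, ?_⟩
  have hquad : ∀ Y : su 2, α Y Y =
      (l ^ 2 / r) * binner (Y : Matrix (Fin 2) (Fin 2) ℂ) (Y : Matrix (Fin 2) (Fin 2) ℂ) := by
    intro Y
    rcases eq_or_ne Y 0 with rfl | hY0
    · show α 0 0 = _ * binner (0 : Matrix (Fin 2) (Fin 2) ℂ) 0
      simp [binner]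
    · obtain ⟨s, hspos, hsph, hs2⟩ := sphere Y hY0
      have h2 : α (s • Y) (s • Y) = l ^ 2 := by
        have h3 := (key (s • Y) hsph).2
        have hnn : 0 ≤ α (s • Y) (s • Y) :=
          le_of_lt (hpos _ (smul_ne_zero hspos.ne' hY0))
        rw [← h3]; exact (Real.sq_sqrt hnn).symm
      have h4 : α (s • Y) (s • Y) = s ^ 2 * α Y Y := by
        simp only [_root_.map_smul, LinearMap.smul_apply, smul_eq_mul]; ring
      have hbY : 0 < binner (Y : Matrix (Fin 2) (Fin 2) ℂ) (Y : Matrix (Fin 2) (Fin 2) ℂ) :=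
        binner_su2_pos Y.2 (by simpa using hY0)
      have hs2pos : (0:ℝ) < s ^ 2 := by positivity
      rw [h4] at h2
      rw [div_mul_eq_mul_div, eq_div_iff hrpos.ne']
      linear_combination (-(α Y Y)) * hs2 +
        (binner (Y : Matrix (Fin 2) (Fin 2) ℂ) (Y : Matrix (Fin 2) (Fin 2) ℂ)) * h2
  intro Y Z
  have e1 : α (Y + Z) (Y + Z) = α Y Y + 2 * α Y Z + α Z Z := by
    simp only [map_add, LinearMap.add_apply]
    rw [hsymm Z Y]; ring
  have e2 : binner (((Y + Z : su 2)) : Matrix (Fin 2) (Fin 2) ℂ)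
      ((Y + Z : su 2) : Matrix (Fin 2) (Fin 2) ℂ) =
      binner (Y : Matrix (Fin 2) (Fin 2) ℂ) (Y : Matrix (Fin 2) (Fin 2) ℂ) +
      2 * binner (Y : Matrix (Fin 2) (Fin 2) ℂ) (Z : Matrix (Fin 2) (Fin 2) ℂ) +
      binner (Z : Matrix (Fin 2) (Fin 2) ℂ) (Z : Matrix (Fin 2) (Fin 2) ℂ) := by
    show binner ((Y : Matrix (Fin 2) (Fin 2) ℂ) + (Z : Matrix (Fin 2) (Fin 2) ℂ))
      ((Y : Matrix (Fin 2) (Fin 2) ℂ) + (Z : Matrix (Fin 2) (Fin 2) ℂ)) = _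
    rw [binner_add_left, binner_add_right, binner_add_right,
      binner_symm (Z : Matrix (Fin 2) (Fin 2) ℂ) (Y : Matrix (Fin 2) (Fin 2) ℂ)]
    ring
  have q1 := hquad (Y + Z)
  have q2 := hquad Y
  have q3 := hquad Z
  rw [e1, e2] at q1
  linarith
end

section
/- Let Γ ⊂ O(2) be the subgroup of order 6 generated by the rotation of ℝ² by angle 2π/3 and the reflection across the first coordinate axis, and let v ∈ ℝ² be such that the orbit Γ·v consists of exactly 6 distinct points. Let q be a positive definite quadratic form on ℝ², β a linear functional on ℝ², and c ∈ ℝ, and suppose q(w) + β(w) = c for every w ∈ Γ·v. Then β = 0 and q(x) = (c/⟨v,v⟩)·⟨x,x⟩ for all x ∈ ℝ², where ⟨·,·⟩ is the standard inner product; that is, any ellipse passing through the six points of the orbit is the circle through them centered at the origin. -/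
/-- Rotation of `ℝ²` by the angle `2π/3`, as a linear automorphism. -/
noncomputable def rot23 : (ℝ × ℝ) ≃ₗ[ℝ] (ℝ × ℝ) where
  toFun p := (Real.cos (2 * Real.pi / 3) * p.1 - Real.sin (2 * Real.pi / 3) * p.2,
              Real.sin (2 * Real.pi / 3) * p.1 + Real.cos (2 * Real.pi / 3) * p.2)
  invFun p := (Real.cos (2 * Real.pi / 3) * p.1 + Real.sin (2 * Real.pi / 3) * p.2,
              -(Real.sin (2 * Real.pi / 3)) * p.1 + Real.cos (2 * Real.pi / 3) * p.2)
  map_add' a b := by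
    apply Prod.ext <;> simp <;> ring
  map_smul' c a := by
    apply Prod.ext <;> simp <;> ring
  left_inv p := by
    have h := Real.sin_sq_add_cos_sq (2 * Real.pi / 3)
    refine Prod.ext ?_ ?_
    · simp only
      linear_combination p.1 * h
    · simp only
      linear_combination p.2 * h
  right_inv p := by
    have h := Real.sin_sq_add_cos_sq (2 * Real.pi / 3)
    refine Prod.ext ?_ ?_
    · simp only
      linear_combination p.1 * h
    · simp only
      linear_combination p.2 * h

/-- Reflection of `ℝ²` across the first coordinate axis, as a linear automorphism. -/
noncomputable def reflx : (ℝ × ℝ) ≃ₗ[ℝ] (ℝ × ℝ) where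
  toFun p := (p.1, -p.2)
  invFun p := (p.1, -p.2)
  map_add' a b := by apply Prod.ext <;> simp <;> ring
  map_smul' c a := by apply Prod.ext <;> simp
  left_inv p := by apply Prod.ext <;> simp
  right_inv p := by apply Prod.ext <;> simp

/-! ### Auxiliary lemmas -/

lemma cos23 : Real.cos (2 * Real.pi / 3) = -(1/2) := by
  rw [show (2*Real.pi/3) = Real.pi - Real.pi/3 by ring, Real.cos_pi_sub, Real.cos_pi_div_three]

lemma sin23 : Real.sin (2 * Real.pi / 3) = Real.sqrt 3 / 2 := by
  rw [show (2*Real.pi/3) = Real.pi - Real.pi/3 by ring, Real.sin_pi_sub, Real.sin_pi_div_three]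

lemma sqrt3_sq : Real.sqrt 3 * Real.sqrt 3 = 3 := Real.mul_self_sqrt (by norm_num)

lemma rot23_apply (p : ℝ × ℝ) :
    rot23 p = (-(1/2) * p.1 - Real.sqrt 3 / 2 * p.2, Real.sqrt 3 / 2 * p.1 + -(1/2) * p.2) := by
  show (Real.cos (2 * Real.pi / 3) * p.1 - Real.sin (2 * Real.pi / 3) * p.2,
        Real.sin (2 * Real.pi / 3) * p.1 + Real.cos (2 * Real.pi / 3) * p.2) = _
  rw [cos23, sin23]

lemma reflx_apply (p : ℝ × ℝ) : reflx p = (p.1, -p.2) := rfl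

lemma rot23_cubed (w : ℝ × ℝ) : rot23 (rot23 (rot23 w)) = w := by
  simp only [rot23_apply]
  have h3 := sqrt3_sq
  exact Prod.ext (by simp only; linear_combination (3/8*w.1 + Real.sqrt 3/8*w.2) * h3)
    (by simp only; linear_combination (3/8*w.2 - Real.sqrt 3/8*w.1) * h3)

lemma reflx_sq (w : ℝ × ℝ) : reflx (reflx w) = w := by
  simp only [reflx_apply]; exact Prod.ext rfl (by simp)

lemma reflx_rot23 (w : ℝ × ℝ) : reflx (rot23 w) = rot23 (rot23 (reflx w)) := by
  simp only [rot23_apply, reflx_apply]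
  have h3 := sqrt3_sq
  exact Prod.ext (by simp only; linear_combination (w.1/4) * h3)
    (by simp only; linear_combination (-w.2/4) * h3)

lemma rot23_inv (w : ℝ × ℝ) : rot23⁻¹ w = rot23 (rot23 w) := by
  apply rot23.injective
  show rot23 (rot23.symm w) = _
  rw [rot23.apply_symm_apply, rot23_cubed]

lemma reflx_inv (w : ℝ × ℝ) : reflx⁻¹ w = reflx w := by
  apply reflx.injective
  show reflx (reflx.symm w) = _
  rw [reflx.apply_symm_apply, reflx_sq]

lemma tail_ncard_le {α : Type*} (b c d e f : α) : ({b, c, d, e, f} : Set α).ncard ≤ 5 := by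
  have h1 := Set.ncard_insert_le b ({c, d, e, f} : Set α)
  have h2 := Set.ncard_insert_le c ({d, e, f} : Set α)
  have h3 := Set.ncard_insert_le d ({e, f} : Set α)
  have h4 := Set.ncard_insert_le e ({f} : Set α)
  have h5 : ({f} : Set α).ncard = 1 := Set.ncard_singleton f
  omega

lemma six_ncard_le {α : Type*} (a b c d e f : α) (h : a ∈ ({b, c, d, e, f} : Set α)) :
    ({a, b, c, d, e, f} : Set α).ncard ≤ 5 := by
  rw [show ({a, b, c, d, e, f} : Set α) = {b, c, d, e, f} from Set.insert_eq_self.mpr h]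
  exact tail_ncard_le b c d e f

/-- Representation of a quadratic form on `ℝ × ℝ` in coordinates. -/
lemma quad_rep (q : QuadraticForm ℝ (ℝ × ℝ)) (w : ℝ × ℝ) :
    q w = w.1^2 * q (1,0) + w.1*w.2 * QuadraticMap.polar q (1,0) (0,1) + w.2^2 * q (0,1) := by
  have hw : w = w.1 • ((1:ℝ),(0:ℝ)) + w.2 • ((0:ℝ),(1:ℝ)) := by apply Prod.ext <;> simp
  have h1 := QuadraticMap.map_add (⇑q) (w.1 • ((1:ℝ),(0:ℝ))) (w.2 • ((0:ℝ),(1:ℝ)))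
  have h2 := QuadraticMap.map_smul q w.1 ((1:ℝ),(0:ℝ))
  have h3 := QuadraticMap.map_smul q w.2 ((0:ℝ),(1:ℝ))
  have h4 := QuadraticMap.polar_smul_left q w.1 ((1:ℝ),(0:ℝ)) (w.2 • ((0:ℝ),(1:ℝ)))
  have h5 := QuadraticMap.polar_smul_right q w.2 ((1:ℝ),(0:ℝ)) ((0:ℝ),(1:ℝ))
  rw [hw]
  rw [h1, h2, h3, h4, h5]
  simp [smul_eq_mul]
  ring

/-- Linear representation. -/
lemma lin_rep (β : (ℝ × ℝ) →ₗ[ℝ] ℝ) (w : ℝ × ℝ) :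
    β w = β (1, 0) * w.1 + β (0, 1) * w.2 := by
  have hw : w = w.1 • ((1:ℝ), (0:ℝ)) + w.2 • ((0:ℝ), (1:ℝ)) := by apply Prod.ext <;> simp
  conv_lhs => rw [hw]
  rw [map_add, map_smul, map_smul, smul_eq_mul, smul_eq_mul]
  ring

/-- The purely algebraic heart of the proof. -/
lemma key_algebra (A B D pp rr c x y t : ℝ) (ht : t * t = 3)
    (hy : y ≠ 0) (hm : t * x - y ≠ 0) (hn : t * x + y ≠ 0)
    (hE1 : A*x^2 + B*(x*y) + D*y^2 + (pp*x + rr*y) = c)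
    (hE2 : A*(-(x+t*y)/2)^2 + B*((-(x+t*y)/2)*((t*x-y)/2)) + D*((t*x-y)/2)^2
      + (pp*(-(x+t*y)/2) + rr*((t*x-y)/2)) = c)
    (hE3 : A*((t*y-x)/2)^2 + B*(((t*y-x)/2)*(-(t*x+y)/2)) + D*(-(t*x+y)/2)^2
      + (pp*((t*y-x)/2) + rr*(-(t*x+y)/2)) = c)
    (hE4 : A*x^2 + B*(x*(-y)) + D*(-y)^2 + (pp*x + rr*(-y)) = c)
    (hE5 : A*((t*y-x)/2)^2 + B*(((t*y-x)/2)*((t*x+y)/2)) + D*((t*x+y)/2)^2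
      + (pp*((t*y-x)/2) + rr*((t*x+y)/2)) = c)
    (hE6 : A*(-(x+t*y)/2)^2 + B*((-(x+t*y)/2)*(-(t*x-y)/2)) + D*(-(t*x-y)/2)^2
      + (pp*(-(x+t*y)/2) + rr*(-(t*x-y)/2)) = c) :
    B = 0 ∧ rr = 0 ∧ pp = 0 ∧ D = A ∧ A = c / (x*x + y*y) := by
  have ht0 : t ≠ 0 := by intro h; rw [h] at ht; norm_num at ht
  have hm2 : (t*x - y)/2 ≠ 0 := by intro h; exact hm (by linarith [h])
  have hn2 : (t*x + y)/2 ≠ 0 := by intro h; exact hn (by linarith [h])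
  have hk1 : y * (B*x + rr) = 0 := by linear_combination (hE1 - hE4)/2
  have hk2 : (t*x - y)/2 * (B*(-(x+t*y)/2) + rr) = 0 := by linear_combination (hE2 - hE6)/2
  have hk3 : (t*x + y)/2 * (B*((t*y-x)/2) + rr) = 0 := by linear_combination (hE5 - hE3)/2
  have e1 : B*x + rr = 0 := by
    rcases mul_eq_zero.mp hk1 with h | h
    · exact absurd h hy
    · exact h
  have e2 : B*(-(x+t*y)/2) + rr = 0 := by
    rcases mul_eq_zero.mp hk2 with h | h
    · exact absurd h hm2
    · exact h
  have e3 : B*((t*y-x)/2) + rr = 0 := by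
    rcases mul_eq_zero.mp hk3 with h | h
    · exact absurd h hn2
    · exact h
  have hBty : B * (t*y) = 0 := by linear_combination e3 - e2
  have hB : B = 0 := by
    rcases mul_eq_zero.mp hBty with h | h
    · exact h
    · exact absurd h (mul_ne_zero ht0 hy)
  have hr : rr = 0 := by linear_combination e1 - x * hB
  subst hB; subst hr
  -- step 2: pp and A = D
  have hk4 : t*y*(A*x - D*x - pp) = 0 := by
    linear_combination hE2 - hE3
  have hp : A*x - D*x - pp = 0 := by
    rcases mul_eq_zero.mp hk4 with h | h
    · exact absurd h (mul_ne_zero ht0 hy)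
    · exact h
  have hk5 : (y*y - x*x)*(A - D) - 2*pp*x = 0 := by
    linear_combination (2/3)*(hE2 + hE3 - 2*hE1) - ((A*(y*y) + D*(x*x))/3)*ht
  have h6 : (A - D)*(3*(x*x) - y*y) = 0 := by
    linear_combination (-1 : ℝ)*hk5 + 2*x*hp
  have h3xy : 3*(x*x) - y*y ≠ 0 := by
    intro h0
    apply mul_ne_zero hm hn
    linear_combination h0 + (x*x)*ht
  have hAD : D = A := by
    rcases mul_eq_zero.mp h6 with h | h
    · linarith [h]
    · exact absurd h h3xy
  have hpp : pp = 0 := by linear_combination (-x)*hAD - hp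
  have hxy0 : x*x + y*y ≠ 0 := by
    have h1 : 0 < x*x + y*y := by nlinarith [mul_self_nonneg x, mul_self_pos.mpr hy]
    exact h1.ne'
  have hA : A = c / (x*x + y*y) := by
    rw [eq_div_iff hxy0]
    linear_combination hE1 - (y*y)*hAD - x*hpp
  exact ⟨rfl, rfl, hpp, hAD, hA⟩

/-- if `Γ ⊂ O(2)` is the order-6 subgroup generated by the rotation by `2π/3`
and the reflection across the first axis, `v ∈ ℝ²` has an orbit `Γ·v` of exactly 6 points,
and the ellipse `q + β = c` passes through all six points, then `β = 0` and
`q(x) = (c/⟨v,v⟩)·⟨x,x⟩`. -/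
theorem stmt_9 (v : ℝ × ℝ)
    (horb : Set.ncard {w : ℝ × ℝ | ∃ g ∈ Subgroup.closure ({rot23, reflx} :
      Set ((ℝ × ℝ) ≃ₗ[ℝ] (ℝ × ℝ))), g v = w} = 6)
    (q : QuadraticForm ℝ (ℝ × ℝ)) (hq : q.PosDef)
    (β : (ℝ × ℝ) →ₗ[ℝ] ℝ) (c : ℝ)
    (hellipse : ∀ w ∈ {w : ℝ × ℝ | ∃ g ∈ Subgroup.closure ({rot23, reflx} :
      Set ((ℝ × ℝ) ≃ₗ[ℝ] (ℝ × ℝ))), g v = w}, q w + β w = c) :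
    β = 0 ∧ ∀ x : ℝ × ℝ,
      q x = (c / (v.1 * v.1 + v.2 * v.2)) * (x.1 * x.1 + x.2 * x.2) := by
  set Γ := Subgroup.closure ({rot23, reflx} : Set ((ℝ × ℝ) ≃ₗ[ℝ] (ℝ × ℝ))) with hΓ
  have hRmem : rot23 ∈ Γ := Subgroup.subset_closure (by left; rfl)
  have hFmem : reflx ∈ Γ := Subgroup.subset_closure (by right; rfl)
  set Tv : Set (ℝ × ℝ) :=
    {v, rot23 v, rot23 (rot23 v), reflx v, rot23 (reflx v), rot23 (rot23 (reflx v))} with hTv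
  have memTv : ∀ w, w ∈ Tv ↔ (w = v ∨ w = rot23 v ∨ w = rot23 (rot23 v) ∨ w = reflx v ∨
      w = rot23 (reflx v) ∨ w = rot23 (rot23 (reflx v))) := by
    intro w
    simp [hTv, Set.mem_insert_iff]
  have hmapR : ∀ w ∈ Tv, rot23 w ∈ Tv := by
    intro w hw
    rcases (memTv w).mp hw with rfl | rfl | rfl | rfl | rfl | rfl <;> rw [memTv]
    · exact Or.inr (Or.inl rfl)
    · exact Or.inr (Or.inr (Or.inl rfl))
    · exact Or.inl (rot23_cubed v)
    · exact Or.inr (Or.inr (Or.inr (Or.inr (Or.inl rfl))))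
    · exact Or.inr (Or.inr (Or.inr (Or.inr (Or.inr rfl))))
    · exact Or.inr (Or.inr (Or.inr (Or.inl (rot23_cubed (reflx v)))))
  have hmapF : ∀ w ∈ Tv, reflx w ∈ Tv := by
    intro w hw
    rcases (memTv w).mp hw with rfl | rfl | rfl | rfl | rfl | rfl <;> rw [memTv]
    · exact Or.inr (Or.inr (Or.inr (Or.inl rfl)))
    · exact Or.inr (Or.inr (Or.inr (Or.inr (Or.inr (by rw [reflx_rot23])))))
    · refine Or.inr (Or.inr (Or.inr (Or.inr (Or.inl ?_))))
      rw [reflx_rot23, reflx_rot23, rot23_cubed]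
    · exact Or.inl (reflx_sq v)
    · refine Or.inr (Or.inr (Or.inl ?_))
      rw [reflx_rot23, reflx_sq]
    · refine Or.inr (Or.inl ?_)
      rw [reflx_rot23, reflx_rot23, reflx_sq, rot23_cubed]
  have horbsub : ∀ g ∈ Γ, (∀ w ∈ Tv, g w ∈ Tv) ∧ (∀ w ∈ Tv, g⁻¹ w ∈ Tv) := by
    intro g hg
    refine Subgroup.closure_induction
      (p := fun g _ => (∀ w ∈ Tv, g w ∈ Tv) ∧ (∀ w ∈ Tv, g⁻¹ w ∈ Tv)) ?_ ?_ ?_ ?_ hg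
    · rintro x (rfl | rfl)
      · refine ⟨hmapR, fun w hw => ?_⟩
        rw [rot23_inv]
        exact hmapR _ (hmapR _ hw)
      · refine ⟨hmapF, fun w hw => ?_⟩
        rw [reflx_inv]
        exact hmapF _ hw
    · exact ⟨fun w hw => hw, fun w hw => hw⟩
    · rintro a b _ _ ⟨ha1, ha2⟩ ⟨hb1, hb2⟩
      constructor
      · intro w hw
        exact ha1 _ (hb1 _ hw)
      · intro w hw
        rw [mul_inv_rev]
        exact hb2 _ (ha2 _ hw)
    · rintro a _ ⟨ha1, ha2⟩
      refine ⟨ha2, fun w hw => ?_⟩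
      rw [inv_inv]
      exact ha1 _ hw
  have hST : {w : ℝ × ℝ | ∃ g ∈ Γ, g v = w} = Tv := by
    ext w
    constructor
    · rintro ⟨g, hg, rfl⟩
      exact (horbsub g hg).1 v ((memTv v).mpr (Or.inl rfl))
    · intro hw
      rcases (memTv w).mp hw with rfl | rfl | rfl | rfl | rfl | rfl
      · exact ⟨1, one_mem Γ, rfl⟩
      · exact ⟨rot23, hRmem, rfl⟩
      · exact ⟨rot23 * rot23, mul_mem hRmem hRmem, rfl⟩
      · exact ⟨reflx, hFmem, rfl⟩
      · exact ⟨rot23 * reflx, mul_mem hRmem hFmem, rfl⟩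
      · exact ⟨rot23 * (rot23 * reflx), mul_mem hRmem (mul_mem hRmem hFmem), rfl⟩
  have hTv6 : Tv.ncard = 6 := by rw [← hST]; exact horb
  -- notation
  set t : ℝ := Real.sqrt 3 with htdef
  have ht : t * t = 3 := sqrt3_sq
  -- coordinates of the six orbit points
  have hP4 : reflx v = (v.1, -v.2) := reflx_apply _
  have hP2 : rot23 v = (-(v.1 + t*v.2)/2, (t*v.1 - v.2)/2) := by
    rw [rot23_apply]; exact Prod.ext (by simp only; ring) (by simp only; ring)
  have hP3 : rot23 (rot23 v) = ((t*v.2 - v.1)/2, -(t*v.1 + v.2)/2) := by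
    rw [hP2, rot23_apply]
    refine Prod.ext ?_ ?_
    · simp only; linear_combination (-v.1/4)*ht
    · simp only; linear_combination (-v.2/4)*ht
  have hP5 : rot23 (reflx v) = ((t*v.2 - v.1)/2, (t*v.1 + v.2)/2) := by
    rw [hP4, rot23_apply]; exact Prod.ext (by simp only; ring) (by simp only; ring)
  have hP6 : rot23 (rot23 (reflx v)) = (-(v.1 + t*v.2)/2, -(t*v.1 - v.2)/2) := by
    rw [hP5, rot23_apply]
    refine Prod.ext ?_ ?_
    · simp only; linear_combination (-v.1/4)*ht
    · simp only; linear_combination (v.2/4)*ht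
  -- distinctness conditions
  have hy : v.2 ≠ 0 := by
    intro h0
    have hvv : v = reflx v := by
      rw [hP4]
      refine Prod.ext rfl ?_
      simp only
      linear_combination 2*h0
    have : Tv.ncard ≤ 5 := by
      rw [hTv]
      exact six_ncard_le _ _ _ _ _ _ (by simp only [Set.mem_insert_iff, Set.mem_singleton_iff]; tauto)
    omega
  have hmdist : t*v.1 - v.2 ≠ 0 := by
    intro h0
    have hvv : v = rot23 (reflx v) := by
      rw [hP5]
      refine Prod.ext ?_ ?_
      · simp only; linear_combination (-v.1/2)*ht + (t/2)*h0
      · simp only; linear_combination (-1/2)*h0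
    have : Tv.ncard ≤ 5 := by
      rw [hTv]
      exact six_ncard_le _ _ _ _ _ _ (by simp only [Set.mem_insert_iff, Set.mem_singleton_iff]; tauto)
    omega
  have hndist : t*v.1 + v.2 ≠ 0 := by
    intro h0
    have hvv : v = rot23 (rot23 (reflx v)) := by
      rw [hP6]
      refine Prod.ext ?_ ?_
      · simp only; linear_combination (-v.1/2)*ht + (t/2)*h0
      · simp only; linear_combination (1/2)*h0
    have : Tv.ncard ≤ 5 := by
      rw [hTv]
      exact six_ncard_le _ _ _ _ _ _ (by simp only [Set.mem_insert_iff, Set.mem_singleton_iff]; tauto)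
    omega
  -- the six equations
  set A : ℝ := q (1, 0) with hA
  set B : ℝ := QuadraticMap.polar q (1, 0) (0, 1) with hB
  set D : ℝ := q (0, 1) with hD
  set pp : ℝ := β (1, 0) with hpp
  set rr : ℝ := β (0, 1) with hrr
  have hrepr : ∀ w : ℝ × ℝ,
      q w + β w = A*w.1^2 + B*(w.1*w.2) + D*w.2^2 + (pp*w.1 + rr*w.2) := by
    intro w
    rw [quad_rep q w, lin_rep β w, ← hA, ← hB, ← hD, ← hpp, ← hrr]
    ring
  have hmem : ∀ w ∈ Tv, q w + β w = c := by
    intro w hw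
    apply hellipse
    rw [hST]; exact hw
  have hE1 := hmem v ((memTv _).mpr (Or.inl rfl))
  have hE2 := hmem (rot23 v) ((memTv _).mpr (Or.inr (Or.inl rfl)))
  have hE3 := hmem (rot23 (rot23 v)) ((memTv _).mpr (Or.inr (Or.inr (Or.inl rfl))))
  have hE4 := hmem (reflx v) ((memTv _).mpr (Or.inr (Or.inr (Or.inr (Or.inl rfl)))))
  have hE5 := hmem (rot23 (reflx v))
    ((memTv _).mpr (Or.inr (Or.inr (Or.inr (Or.inr (Or.inl rfl))))))
  have hE6 := hmem (rot23 (rot23 (reflx v)))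
    ((memTv _).mpr (Or.inr (Or.inr (Or.inr (Or.inr (Or.inr rfl))))))
  rw [hrepr] at hE1
  rw [hP2, hrepr] at hE2
  rw [hP3, hrepr] at hE3
  rw [hP4, hrepr] at hE4
  rw [hP5, hrepr] at hE5
  rw [hP6, hrepr] at hE6
  simp only at hE2 hE3 hE4 hE5 hE6
  obtain ⟨hB0, hr0, hp0, hDA, hAc⟩ :=
    key_algebra A B D pp rr c v.1 v.2 t ht hy hmdist hndist hE1 hE2 hE3 hE4 hE5 hE6
  constructor
  · apply LinearMap.ext
    intro w
    rw [lin_rep β w, ← hpp, ← hrr, hp0, hr0]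
    simp
  · intro w
    rw [quad_rep q w, ← hA, ← hB, ← hD, hB0, hDA, hAc]
    ring
end

section
/- For every integer n ≥ 3 there exist an inner product α on the real Lie algebra su(n) of traceless skew-Hermitian n×n complex matrices, a nonzero vector V ∈ su(n) satisfying |⟨Y,V⟩_bi| < √(α(Y,Y)) for all nonzero Y ∈ su(n) (where ⟨A,B⟩_bi = Re tr(Aᴴ B)), a nonzero vector X ∈ su(n), and a real number l > 0 such that √(α(Y,Y)) + ⟨Y,V⟩_bi = l for all Y in the adjoint orbit {uXu⁻¹ : u ∈ SU(n)}. -/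
open Matrix

attribute [local instance 100] LieRing.ofAssociativeRing

section SUaux11
open Matrix

variable {n : ℕ}

/-- Real part of the trace. -/
noncomputable def RT (A : Matrix (Fin n) (Fin n) ℂ) : ℝ := A.trace.re

lemma RT_add (A B : Matrix (Fin n) (Fin n) ℂ) : RT (A + B) = RT A + RT B := by
  simp [RT, Matrix.trace_add]

lemma RT_sub (A B : Matrix (Fin n) (Fin n) ℂ) : RT (A - B) = RT A - RT B := by
  simp [RT, Matrix.trace_sub]

lemma RT_smul (r : ℝ) (A : Matrix (Fin n) (Fin n) ℂ) : RT (r • A) = r * RT A := by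
  simp [RT, Matrix.trace_smul, Complex.smul_re]

lemma RT_nsmul (A : Matrix (Fin n) (Fin n) ℂ) : RT (((n : ℕ) : ℂ) • A) = (n : ℝ) * RT A := by
  simp [RT, Matrix.trace_smul]

lemma RT_mul_comm (A B : Matrix (Fin n) (Fin n) ℂ) : RT (A * B) = RT (B * A) := by
  simp [RT, Matrix.trace_mul_comm A B]

lemma binner_skew {A : Matrix (Fin n) (Fin n) ℂ} (hA : Aᴴ = -A)
    (B : Matrix (Fin n) (Fin n) ℂ) : binner A B = - RT (A * B) := by
  rw [binner, hA]
  simp [RT, Matrix.neg_mul]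

lemma binner_apply (A B : Matrix (Fin n) (Fin n) ℂ) :
    binner A B = ∑ i, ∑ j, ((starRingEnd ℂ) (A j i) * B j i).re := by
  simp [binner, Matrix.trace, Matrix.diag, Matrix.mul_apply, Matrix.conjTranspose_apply,
    Complex.re_sum]

lemma binner_self_eq (A : Matrix (Fin n) (Fin n) ℂ) :
    binner A A = ∑ i, ∑ j, Complex.normSq (A j i) := by
  rw [binner_apply]
  congr 1; ext i; congr 1; ext j
  rw [← Complex.normSq_eq_conj_mul_self]
  simp

lemma binner_self_nonneg (A : Matrix (Fin n) (Fin n) ℂ) : 0 ≤ binner A A := by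
  rw [binner_self_eq]
  apply Finset.sum_nonneg; intro i _
  apply Finset.sum_nonneg; intro j _
  exact Complex.normSq_nonneg _

lemma binner_self_pos {A : Matrix (Fin n) (Fin n) ℂ} (hA : A ≠ 0) : 0 < binner A A := by
  rw [binner_self_eq]
  obtain ⟨i, j, hij⟩ : ∃ i j, A i j ≠ 0 := by
    by_contra h
    push_neg at h
    exact hA (by ext i j; simp [h])
  have h1 : 0 < Complex.normSq (A i j) := Complex.normSq_pos.mpr hij
  have h2 : Complex.normSq (A i j) ≤ ∑ i', Complex.normSq (A i' j) :=
    Finset.single_le_sum (f := fun i' => Complex.normSq (A i' j))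
      (fun _ _ => Complex.normSq_nonneg _) (Finset.mem_univ i)
  have h3 : (∑ i', Complex.normSq (A i' j)) ≤ ∑ i', ∑ j', Complex.normSq (A j' i') :=
    Finset.single_le_sum (f := fun jj => ∑ i', Complex.normSq (A i' jj))
      (fun _ _ => Finset.sum_nonneg fun _ _ => Complex.normSq_nonneg _) (Finset.mem_univ j)
  linarith

lemma row_le_binner_self (A : Matrix (Fin n) (Fin n) ℂ) (k : Fin n) :
    (∑ j, Complex.normSq (A k j)) ≤ binner A A := by
  rw [binner_self_eq]
  have h3 : (∑ i', Complex.normSq (A k i')) ≤ ∑ jj, ∑ i', Complex.normSq (A jj i') :=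
    Finset.single_le_sum (f := fun jj => ∑ i', Complex.normSq (A jj i'))
      (fun _ _ => Finset.sum_nonneg fun _ _ => Complex.normSq_nonneg _) (Finset.mem_univ k)
  calc (∑ j, Complex.normSq (A k j)) ≤ ∑ jj, ∑ i', Complex.normSq (A jj i') := h3
    _ = ∑ i, ∑ j, Complex.normSq (A j i) := Finset.sum_comm

lemma trace_mul_std (A : Matrix (Fin n) (Fin n) ℂ) (k : Fin n) :
    (A * Matrix.single k k 1).trace = A k k := by
  simp [Matrix.trace, Matrix.diag, Matrix.mul_apply, Matrix.single, Matrix.of_apply,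
    ite_and, Finset.sum_ite_eq, Finset.sum_ite_eq', eq_comm]

/-- The diagonal matrix `1 - n E_{kk}`. -/
noncomputable def Dm (k : Fin n) : Matrix (Fin n) (Fin n) ℂ :=
  1 - (n : ℂ) • Matrix.single k k 1

/-- The matrix `i (1 - n E_{kk}) ∈ su(n)`. -/
noncomputable def X0 (k : Fin n) : Matrix (Fin n) (Fin n) ℂ := Complex.I • Dm k

variable (k : Fin n)

lemma Dm_herm : (Dm k)ᴴ = Dm k := by
  ext i j
  simp only [Dm, Matrix.conjTranspose_apply, Matrix.sub_apply, Matrix.smul_apply,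
    Matrix.one_apply, Matrix.single, Matrix.of_apply]
  by_cases h1 : i = j <;> by_cases h2 : k = i <;> by_cases h3 : k = j <;>
    simp_all [eq_comm]

lemma trace_Dm : (Dm k).trace = 0 := by
  simp [Dm, Matrix.trace_sub, Matrix.trace_smul, Matrix.trace_one]

lemma X0_herm : (X0 k)ᴴ = -(X0 k) := by
  rw [X0, Matrix.conjTranspose_smul, Dm_herm]
  simp [Complex.conj_I, neg_smul]

lemma trace_X0 : (X0 k).trace = 0 := by
  simp [X0, Matrix.trace_smul, trace_Dm]

lemma X0_sq : X0 k * X0 k = (Complex.I * (2 - (n:ℂ))) • X0 k + ((1:ℂ) - (n:ℂ)) • 1 := by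
  have hEE : Matrix.single k k (1:ℂ) * Matrix.single k k 1
      = Matrix.single k k 1 := by
    simpa using Matrix.single_mul_single_same (c := (1:ℂ)) k k k 1
  simp only [X0, Dm, Matrix.smul_mul, Matrix.mul_smul, sub_mul, mul_sub, Matrix.one_mul,
    Matrix.mul_one, smul_sub, smul_smul, hEE]
  match_scalars
  · linear_combination ((n:ℂ)-1) * Complex.I_mul_I
  · ring

end SUaux11

set_option maxHeartbeats 1600000 in
/-- for every `n ≥ 3` there exist an inner product `α` on `su(n)`, a nonzero
`V ∈ su(n)` satisfying the Randers condition `|⟨Y,V⟩_bi| < √(α(Y,Y))` for `Y ≠ 0`, a nonzero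
`X ∈ su(n)` and `l > 0` such that `√(α(Y,Y)) + ⟨Y,V⟩_bi = l` on the adjoint orbit of `X`. -/
theorem stmt_11 (n : ℕ) (hn : 3 ≤ n) :
    ∃ (α : (su n) →ₗ[ℝ] (su n) →ₗ[ℝ] ℝ) (V X : su n) (l : ℝ),
      (∀ x y : su n, α x y = α y x) ∧
      (∀ x : su n, x ≠ 0 → 0 < α x x) ∧
      V ≠ 0 ∧
      (∀ Y : su n, Y ≠ 0 →
        |binner (Y : Matrix (Fin n) (Fin n) ℂ) (V : Matrix (Fin n) (Fin n) ℂ)| <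
          Real.sqrt (α Y Y)) ∧
      X ≠ 0 ∧ 0 < l ∧
      ∀ Y : su n, (∃ u : specialUnitaryGroup (Fin n) ℂ, Y = Ad u X) →
        Real.sqrt (α Y Y) +
          binner (Y : Matrix (Fin n) (Fin n) ℂ) (V : Matrix (Fin n) (Fin n) ℂ) = l := by
  have hn0 : 0 < n := by omega
  set k : Fin n := ⟨0, hn0⟩ with hk
  set N : ℝ := (n : ℝ) with hNdef
  have hN3 : (3:ℝ) ≤ N := by rw [hNdef]; exact_mod_cast hn
  set l : ℝ := N^2 - N with hl
  set ε : ℝ := 1/(2*N) with hε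
  set δ : ℝ := (N-1)/(N-2) with hδ
  have hN2 : (0:ℝ) < N - 2 := by linarith
  have hNpos : (0:ℝ) < N := by linarith
  have hδpos : 0 < δ := by rw [hδ]; exact div_pos (by linarith) hN2
  have hεpos : 0 < ε := by rw [hε]; positivity
  have hδval : δ * (N - 2) = N - 1 := by rw [hδ]; field_simp
  set m : ℝ := l - δ * (N - 1) with hm
  have hmpos : 0 < m := by
    rw [hm, hl]
    have h1 : δ * (N - 1) * (N - 2) = (N - 1)^2 := by rw [hδ]; field_simp
    nlinarith [h1, hN2, hN3]
  set W : Matrix (Fin n) (Fin n) ℂ := δ • Dm k with hW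
  set V0 : Matrix (Fin n) (Fin n) ℂ := ε • X0 k with hV0
  have hX0mem : X0 k ∈ su n := ⟨X0_herm k, trace_X0 k⟩
  have hV0mem : V0 ∈ su n := by
    rw [hV0]
    exact (su n).smul_mem ε hX0mem
  -- the bilinear form
  set g : su n → su n → ℝ := fun Y Z =>
    -l * RT ((Y : Matrix (Fin n) (Fin n) ℂ) * (Z : Matrix (Fin n) (Fin n) ℂ))
    - (1/2) * RT (((Y : Matrix (Fin n) (Fin n) ℂ) * (Z : Matrix (Fin n) (Fin n) ℂ)
        + (Z : Matrix (Fin n) (Fin n) ℂ) * (Y : Matrix (Fin n) (Fin n) ℂ)) * W)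
    + RT ((Y : Matrix (Fin n) (Fin n) ℂ) * V0) * RT ((Z : Matrix (Fin n) (Fin n) ℂ) * V0)
    with hg
  have hcadd : ∀ x y : su n,
      ((x + y : su n) : Matrix (Fin n) (Fin n) ℂ)
        = (x : Matrix (Fin n) (Fin n) ℂ) + (y : Matrix (Fin n) (Fin n) ℂ) := fun _ _ => rfl
  have hcsmul : ∀ (r : ℝ) (x : su n),
      ((r • x : su n) : Matrix (Fin n) (Fin n) ℂ)
        = r • (x : Matrix (Fin n) (Fin n) ℂ) := fun _ _ => rfl
  have hg1 : ∀ (Y₁ Y₂ Z : su n), g (Y₁ + Y₂) Z = g Y₁ Z + g Y₂ Z := by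
    intro Y₁ Y₂ Z
    simp only [hg, hcadd]
    simp only [RT, Matrix.add_mul, Matrix.mul_add, Matrix.trace_add, Complex.add_re]
    ring
  have hg2 : ∀ (r : ℝ) (Y Z : su n), g (r • Y) Z = r • g Y Z := by
    intro r Y Z
    simp only [hg, hcsmul, smul_eq_mul]
    simp only [RT, Matrix.smul_mul, Matrix.mul_smul, Matrix.add_mul, Matrix.mul_add,
      Matrix.trace_add, Matrix.trace_smul, Complex.add_re, Complex.smul_re, smul_eq_mul]
    ring
  have hg3 : ∀ (Y Z₁ Z₂ : su n), g Y (Z₁ + Z₂) = g Y Z₁ + g Y Z₂ := by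
    intro Y Z₁ Z₂
    simp only [hg, hcadd]
    simp only [RT, Matrix.add_mul, Matrix.mul_add, Matrix.trace_add, Complex.add_re]
    ring
  have hg4 : ∀ (r : ℝ) (Y Z : su n), g Y (r • Z) = r • g Y Z := by
    intro r Y Z
    simp only [hg, hcsmul, smul_eq_mul]
    simp only [RT, Matrix.smul_mul, Matrix.mul_smul, Matrix.add_mul, Matrix.mul_add,
      Matrix.trace_add, Matrix.trace_smul, Complex.add_re, Complex.smul_re, smul_eq_mul]
    ring
  -- the key lower bound
  have hlow : ∀ Z : su n, m * binner (Z : Matrix (Fin n) (Fin n) ℂ) (Z : Matrix (Fin n) (Fin n) ℂ)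
      + RT ((Z : Matrix (Fin n) (Fin n) ℂ) * V0)^2 ≤ g Z Z := by
    intro Z
    set C : Matrix (Fin n) (Fin n) ℂ := (Z : Matrix (Fin n) (Fin n) ℂ) with hC
    have hCh : Cᴴ = -C := Z.2.1
    set S : ℝ := binner C C with hS
    set p : ℝ := ∑ j, Complex.normSq (C k j) with hp
    have hpnonneg : 0 ≤ p := Finset.sum_nonneg fun _ _ => Complex.normSq_nonneg _
    have hpS : p ≤ S := row_le_binner_self C k
    have hSnn : 0 ≤ S := binner_self_nonneg C
    have hRTCC : RT (C * C) = -S := by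
      have := binner_skew hCh C
      rw [hS]; linarith [this]
    have hentry : ((C * C) k k).re = -p := by
      have hcol : ∀ j, C j k = -star (C k j) := by
        intro j
        have h := congrFun (congrFun hCh j) k
        simp only [Matrix.conjTranspose_apply, Matrix.neg_apply] at h
        rw [h, neg_neg]
      have : (C * C) k k = ∑ j, -((Complex.normSq (C k j) : ℂ)) := by
        rw [Matrix.mul_apply]
        congr 1; ext j
        rw [hcol j, mul_neg, neg_inj]
        exact Complex.mul_conj _
      rw [this, hp]
      simp [Complex.re_sum]
    have hCCW : RT (C * C * W) = δ * (-S) - δ * N * (-p) := by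
      have h1 : C * C * W = δ • (C * C * Dm k) := by
        rw [hW, Matrix.mul_smul]
      have h2 : C * C * Dm k = C * C - ((n:ℕ):ℂ) • (C * C * Matrix.single k k 1) := by
        rw [Dm, Matrix.mul_sub, Matrix.mul_one, Matrix.mul_smul]
      have h3 : RT (C * C * Dm k) = -S - N * (-p) := by
        rw [h2, RT_sub, RT_nsmul, hRTCC]
        have : RT (C * C * Matrix.single k k 1) = -p := by
          rw [RT, trace_mul_std, hentry]
        rw [this, hNdef]
      rw [h1, RT_smul, h3]
      ring
    have hval : g Z Z = l * S + (δ * S - δ * N * p) + RT (C * V0)^2 := by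
      rw [hg]
      simp only [← hC]
      have hmid : RT ((C * C + C * C) * W) = 2 * RT (C * C * W) := by
        rw [Matrix.add_mul, RT_add]; ring
      rw [hmid, hCCW, hRTCC]
      ring
    rw [hval]
    have hδN : 0 ≤ δ * N := by positivity
    nlinarith [mul_le_mul_of_nonneg_left hpS hδN, sq_nonneg (RT (C * V0))]
  -- symmetry
  have hsymm : ∀ Y Z : su n, g Y Z = g Z Y := by
    intro Y Z
    simp only [hg]
    rw [RT_mul_comm ((Y : Matrix (Fin n) (Fin n) ℂ)) ((Z : Matrix (Fin n) (Fin n) ℂ)),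
      add_comm ((Y : Matrix (Fin n) (Fin n) ℂ) * (Z : Matrix (Fin n) (Fin n) ℂ))
        ((Z : Matrix (Fin n) (Fin n) ℂ) * (Y : Matrix (Fin n) (Fin n) ℂ))]
    ring
  -- nonvanishing of X0
  have hX0ne : X0 k ≠ 0 := by
    intro h
    have h1 : (X0 k) k k = 0 := by rw [h]; simp
    have h2 : (X0 k) k k = Complex.I * ((1:ℂ) - (n:ℂ)) := by
      simp [X0, Dm, Matrix.smul_apply, Matrix.sub_apply, Matrix.one_apply_eq,
        Matrix.single_apply_same, smul_eq_mul]
    rw [h2] at h1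
    have h3 : (1:ℂ) - (n:ℂ) = 0 := by
      rcases mul_eq_zero.mp h1 with hcase | hcase
      · exact absurd hcase Complex.I_ne_zero
      · exact hcase
    have h4 : ((n:ℂ)) = 1 := by linear_combination -h3
    have h5 : (n : ℝ) = 1 := by exact_mod_cast congrArg Complex.re h4
    rw [← hNdef] at h5
    linarith
  have hbinner_eq_f : ∀ Z : su n,
      binner (Z : Matrix (Fin n) (Fin n) ℂ) V0 = - RT ((Z : Matrix (Fin n) (Fin n) ℂ) * V0) :=
    fun Z => binner_skew Z.2.1 V0
  refine ⟨LinearMap.mk₂ ℝ g hg1 hg2 hg3 hg4, ⟨V0, hV0mem⟩, ⟨X0 k, hX0mem⟩, l, ?_, ?_, ?_, ?_, ?_, ?_, ?_⟩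
  · intro x y
    simpa only [LinearMap.mk₂_apply] using hsymm x y
  · intro x hx
    have hxne : (x : Matrix (Fin n) (Fin n) ℂ) ≠ 0 := by
      intro h
      exact hx (Subtype.ext h)
    have hS : 0 < binner (x : Matrix (Fin n) (Fin n) ℂ) (x : Matrix (Fin n) (Fin n) ℂ) :=
      binner_self_pos hxne
    have := hlow x
    simp only [LinearMap.mk₂_apply]
    nlinarith [sq_nonneg (RT ((x : Matrix (Fin n) (Fin n) ℂ) * V0))]
  · intro h
    have h0 : V0 = 0 := congrArg Subtype.val h
    rw [hV0] at h0
    exact hX0ne (by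
      have := smul_eq_zero.mp h0
      rcases this with h | h
      · exact absurd h (ne_of_gt hεpos)
      · exact h)
  · intro Y hY
    have hYne : (Y : Matrix (Fin n) (Fin n) ℂ) ≠ 0 := fun h => hY (Subtype.ext h)
    have hS : 0 < binner (Y : Matrix (Fin n) (Fin n) ℂ) (Y : Matrix (Fin n) (Fin n) ℂ) :=
      binner_self_pos hYne
    have hlb := hlow Y
    simp only [LinearMap.mk₂_apply]
    have hsq : binner (Y : Matrix (Fin n) (Fin n) ℂ) V0 ^ 2 < g Y Y := by
      rw [hbinner_eq_f Y]
      nlinarith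
    have h1 : |binner (Y : Matrix (Fin n) (Fin n) ℂ) V0|
        = Real.sqrt (binner (Y : Matrix (Fin n) (Fin n) ℂ) V0 ^ 2) :=
      (Real.sqrt_sq_eq_abs _).symm
    rw [h1]
    exact Real.sqrt_lt_sqrt (sq_nonneg _) hsq
  · intro h
    exact hX0ne (congrArg Subtype.val h)
  · rw [hl]; nlinarith
  · rintro Y ⟨u, hYu⟩
    obtain ⟨hYh, hYt⟩ := Y.2
    set B : Matrix (Fin n) (Fin n) ℂ := (Y : Matrix (Fin n) (Fin n) ℂ) with hB
    set U : Matrix (Fin n) (Fin n) ℂ := (u : Matrix (Fin n) (Fin n) ℂ) with hU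
    have hmemU : U ∈ unitaryGroup (Fin n) ℂ := (Submonoid.mem_inf.mp u.2).1
    have hU1 : Uᴴ * U = 1 := by
      have := (Matrix.mem_unitaryGroup_iff'.mp hmemU)
      simpa [Matrix.star_eq_conjTranspose] using this
    have hU2 : U * Uᴴ = 1 := by
      have := (Matrix.mem_unitaryGroup_iff.mp hmemU)
      simpa [Matrix.star_eq_conjTranspose] using this
    have hBU : B = U * X0 k * Uᴴ := by rw [hB, hYu]; rfl
    have hBsq : B * B = (Complex.I * (2 - (n:ℂ))) • B + ((1:ℂ) - (n:ℂ)) • 1 := by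
      have hmulB : B * B = U * (X0 k * X0 k) * Uᴴ := by
        rw [hBU]
        simp only [Matrix.mul_assoc]
        rw [show Uᴴ * (U * (X0 k * Uᴴ)) = X0 k * Uᴴ by
          rw [← Matrix.mul_assoc, hU1, Matrix.one_mul]]
      rw [hmulB, X0_sq k, Matrix.mul_add, Matrix.add_mul, Matrix.mul_smul, Matrix.smul_mul,
        Matrix.mul_smul, Matrix.smul_mul, Matrix.mul_one, hU2, ← hBU]
    have htrB : B.trace = 0 := hYt
    have hSB : binner B B = N^2 - N := by
      rw [binner_skew hYh, hBsq]
      have h1 : ((Complex.I * (2 - (n:ℂ))) • B + ((1:ℂ) - (n:ℂ)) • (1 : Matrix (Fin n) (Fin n) ℂ)).trace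
          = ((1:ℂ) - (n:ℂ)) * n := by
        simp [Matrix.trace_add, Matrix.trace_smul, htrB, Matrix.trace_one, smul_eq_mul]
      rw [RT, h1]
      have h2 : ((1:ℂ) - (n:ℂ)) * (n:ℂ) = (((1 - N) * N : ℝ) : ℂ) := by
        rw [hNdef]; push_cast; ring
      rw [h2, Complex.ofReal_re]
      ring
    set τ : ℂ := (B * Dm k).trace with hτ
    set q : ℝ := (Complex.I * τ).re with hq
    have hfY : binner B V0 = -(ε * q) := by
      rw [binner_skew hYh]
      have h1 : B * V0 = ε • (Complex.I • (B * Dm k)) := by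
        rw [hV0, X0, Matrix.mul_smul, Matrix.mul_smul]
      rw [h1, RT_smul]
      have h2 : RT (Complex.I • (B * Dm k)) = q := by
        rw [RT, Matrix.trace_smul, smul_eq_mul, ← hτ, hq]
      rw [h2]
    have hmid : RT (B * B * W) = δ * ((2 - N) * q) := by
      have h1 : B * B * W = δ • (B * B * Dm k) := by rw [hW, Matrix.mul_smul]
      have h2 : B * B * Dm k = (Complex.I * (2 - (n:ℂ))) • (B * Dm k)
          + ((1:ℂ) - (n:ℂ)) • Dm k := by
        rw [hBsq, Matrix.add_mul, Matrix.smul_mul, Matrix.smul_mul, Matrix.one_mul]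
      have h3 : RT (B * B * Dm k) = (2 - N) * q := by
        rw [h2, RT_add, RT]
        rw [RT, Matrix.trace_smul, Matrix.trace_smul, trace_Dm, ← hτ]
        have h4 : (Complex.I * (2 - (n:ℂ))) • τ = (((2 - N : ℝ)):ℂ) * (Complex.I * τ) := by
          rw [smul_eq_mul, hNdef]; push_cast; ring
        rw [h4]
        simp [Complex.mul_re, hq]
      rw [h1, RT_smul, h3]
    have hRTBB : RT (B * B) = (1 - N) * N := by
      have := binner_skew hYh B
      rw [hSB] at this
      linarith
    -- value of g on the orbit
    have hgval : g Y Y = l * (N^2 - N) + δ * (N - 2) * q + (ε * q)^2 := by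
      rw [hg]
      simp only [← hB]
      have hmid2 : RT ((B * B + B * B) * W) = 2 * RT (B * B * W) := by
        rw [Matrix.add_mul, RT_add]; ring
      have hRTBV : RT (B * V0) = ε * q := by
        have := hfY
        rw [binner_skew hYh] at this
        linarith
      rw [hmid2, hmid, hRTBB, hRTBV]
      ring
    set f : ℝ := binner B V0 with hf
    have hfq : f = -(ε * q) := hfY
    have hsq : g Y Y = (l - f)^2 := by
      rw [hgval, hfq, hl, hε, hδ]
      field_simp
      ring
    have hge : m * (N^2 - N) + f^2 ≤ g Y Y := by
      have hlb := hlow Y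
      rw [← hB, hSB] at hlb
      have hfRT : f = - RT (B * V0) := by rw [hf, binner_skew hYh]
      have hf2 : f^2 = RT (B * V0)^2 := by rw [hfRT]; ring
      linarith [hlb]
    have hNN : 0 < N^2 - N := by nlinarith
    have hlpos : 0 < l := by rw [hl]; nlinarith
    have hlf : 0 ≤ l - f := by
      rw [hsq] at hge
      nlinarith [hmpos, hNN]
    simp only [LinearMap.mk₂_apply]
    rw [hsq, Real.sqrt_sq hlf]
    ring
end
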